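/- Suppose complex polynomials f₁, f₂ commute: f₁ ∘ f₂ = f₂ ∘ f₁. Then the filled Julia set of f₁ is contained in the filled Julia set of f₂ and vice versa, hence they are equal (where the filled Julia set of f is the set of points with bounded forward orbit), provided both f₁ and f₂ have degree ≥ 2. -/

import Mathlib

/-- The filled Julia set of a polynomial: points with bounded forward orbit. -/
def filledJulia (f : Polynomial ℂ) : Set ℂ :=
  {z : ℂ | Bornology.IsBounded (Set.range fun j : ℕ => (fun w => f.eval w)^[j] z)}

open Polynomial Filter

/-- Growth estimate for degree ≥ 2 polynomials. -/
lemma growth_bound (f : Polynomial ℂ) (hf : 2 ≤ f.natDegree) :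
    ∃ R : ℝ, 1 ≤ R ∧ ∀ z : ℂ, R ≤ ‖z‖ → 2 * ‖z‖ ≤ ‖f.eval z‖ := by
  have hX : (X ^ 2 : Polynomial ℂ).Monic := monic_X_pow 2
  set g := f /ₘ (X ^ 2) with hg
  set r := f %ₘ (X ^ 2) with hr
  have hf0 : f ≠ 0 := fun h => by simp [h] at hf
  have hdegf : (2 : WithBot ℕ) ≤ f.degree := by
    rw [degree_eq_natDegree hf0]; exact_mod_cast hf
  have hgne : g ≠ 0 := by
    rw [hg, Ne, divByMonic_eq_zero_iff hX, not_lt, degree_X_pow]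
    exact hdegf
  -- lower bound on ‖g.eval z‖ for large ‖z‖
  have hgbig : ∃ c : ℝ, 0 < c ∧ ∃ S : ℝ, ∀ z : ℂ, S ≤ ‖z‖ → c ≤ ‖g.eval z‖ := by
    rcases eq_or_lt_of_le (Nat.zero_le g.natDegree) with h0 | h0
    · refine ⟨‖g.coeff 0‖, norm_pos_iff.mpr fun h => hgne ?_, 0, fun z _ => ?_⟩
      · rw [eq_C_of_natDegree_eq_zero h0.symm, h, map_zero]
      · rw [eq_C_of_natDegree_eq_zero h0.symm]; simp
    · have hdeg : 0 < g.degree := by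
        rwa [← natDegree_pos_iff_degree_pos]
      have ht : Tendsto (fun z : ℂ => ‖g.eval z‖) (Bornology.cobounded ℂ) atTop :=
        g.tendsto_norm_atTop hdeg tendsto_norm_cobounded_atTop
      have := ht.eventually_ge_atTop 1
      rw [← comap_norm_atTop, eventually_comap] at this
      rw [eventually_atTop] at this
      obtain ⟨S, hS⟩ := this
      exact ⟨1, one_pos, S, fun z hz => hS ‖z‖ hz z rfl⟩
  obtain ⟨c, hc, S, hS⟩ := hgbig
  -- bound on r
  have hrdeg : r.degree ≤ 1 := by
    by_cases h0 : r = 0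
    · simp [h0]
    · have h := degree_modByMonic_lt f hX
      rw [degree_X_pow, ← hr, ← natDegree_lt_iff_degree_lt h0] at h
      exact_mod_cast (natDegree_le_iff_degree_le (n := 1)).mp (by omega)
  have hre : ∀ z : ℂ, ‖r.eval z‖ ≤ ‖r.coeff 0‖ + ‖r.coeff 1‖ * ‖z‖ := by
    intro z
    conv_lhs => rw [eq_X_add_C_of_degree_le_one hrdeg]
    simp only [eval_add, eval_mul, eval_C, eval_X]
    calc ‖r.coeff 1 * z + r.coeff 0‖ ≤ ‖r.coeff 1 * z‖ + ‖r.coeff 0‖ := norm_add_le _ _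
    _ = ‖r.coeff 0‖ + ‖r.coeff 1‖ * ‖z‖ := by rw [norm_mul]; ring
  set M : ℝ := ‖r.coeff 0‖ + ‖r.coeff 1‖ with hM
  have hM0 : 0 ≤ M := add_nonneg (norm_nonneg _) (norm_nonneg _)
  refine ⟨max (max 1 S) ((2 + M) / c), le_trans (le_max_left 1 S) (le_max_left _ _), fun z hz => ?_⟩
  have hz1 : 1 ≤ ‖z‖ := le_trans (le_trans (le_max_left 1 S) (le_max_left _ _)) hz
  have hzS : S ≤ ‖z‖ := le_trans (le_trans (le_max_right 1 S) (le_max_left _ _)) hz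
  have hzc : (2 + M) / c ≤ ‖z‖ := le_trans (le_max_right _ _) hz
  have key : f.eval z = r.eval z + z ^ 2 * g.eval z := by
    conv_lhs => rw [← modByMonic_add_div f (X ^ 2)]
    simp [hr, hg]
  have h1 : ‖z ^ 2 * g.eval z‖ ≤ ‖f.eval z‖ + ‖r.eval z‖ := by
    rw [key]
    have := norm_add_le (r.eval z + z ^ 2 * g.eval z) (-(r.eval z))
    simpa using this
  have h2 : c * ‖z‖ ^ 2 ≤ ‖z ^ 2 * g.eval z‖ := by
    rw [norm_mul, norm_pow]
    have := hS z hzS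
    nlinarith [norm_nonneg z, sq_nonneg (‖z‖ - 1)]
  have h3 : ‖r.eval z‖ ≤ M * ‖z‖ := by
    calc ‖r.eval z‖ ≤ ‖r.coeff 0‖ + ‖r.coeff 1‖ * ‖z‖ := hre z
    _ ≤ M * ‖z‖ := by rw [hM]; nlinarith [norm_nonneg (r.coeff 0), norm_nonneg (r.coeff 1)]
  have h4 : (2 + M) ≤ c * ‖z‖ := by
    rw [div_le_iff₀ hc] at hzc; linarith
  nlinarith [norm_nonneg z]

lemma julia_subset_ball (f : Polynomial ℂ) (hf : 2 ≤ f.natDegree) :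
    ∃ R : ℝ, filledJulia f ⊆ Metric.closedBall 0 R := by
  obtain ⟨R, hR1, hR⟩ := growth_bound f hf
  refine ⟨R, fun z hz => ?_⟩
  rw [Metric.mem_closedBall, dist_zero_right]
  by_contra hzR
  push_neg at hzR
  have key : ∀ n : ℕ, 2 ^ n * ‖z‖ ≤ ‖(fun w => f.eval w)^[n] z‖ := by
    intro n
    induction n with
    | zero => simp
    | succ n ih =>
      have hn : R ≤ ‖(fun w => f.eval w)^[n] z‖ := by
        have h2n : (1 : ℝ) ≤ 2 ^ n := one_le_pow₀ (by norm_num)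
        nlinarith
      rw [Function.iterate_succ_apply']
      have := hR _ hn
      have h2n : (1 : ℝ) ≤ 2 ^ n := one_le_pow₀ (by norm_num)
      calc 2 ^ (n+1) * ‖z‖ = 2 * (2 ^ n * ‖z‖) := by ring
      _ ≤ 2 * ‖(fun w => f.eval w)^[n] z‖ := by linarith
      _ ≤ _ := this
  rw [filledJulia, Set.mem_setOf_eq, isBounded_iff_forall_norm_le] at hz
  obtain ⟨C, hC⟩ := hz
  obtain ⟨n, hn⟩ := pow_unbounded_of_one_lt C (one_lt_two (α := ℝ))
  have h5 : ‖(fun w => f.eval w)^[n] z‖ ≤ C := hC _ ⟨n, rfl⟩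
  have h6 := key n
  nlinarith [hR1, pow_nonneg (zero_le_two (α := ℝ)) n]

lemma eval_maps_bounded (f : Polynomial ℂ) {s : Set ℂ} (hs : Bornology.IsBounded s) :
    Bornology.IsBounded ((fun w => f.eval w) '' s) := by
  have h1 : ((fun w => f.eval w) '' s) ⊆ (fun w => f.eval w) '' (closure s) :=
    Set.image_mono subset_closure
  have h2 : IsCompact ((fun w => f.eval w) '' (closure s)) :=
    hs.isCompact_closure.image f.continuous_aeval
  exact h2.isBounded.subset h1

lemma julia_mono (f₁ f₂ : Polynomial ℂ) (h₂ : 2 ≤ f₂.natDegree)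
    (hcomm : f₁.comp f₂ = f₂.comp f₁) : filledJulia f₂ ⊆ filledJulia f₁ := by
  have hc : Function.Commute (fun w => f₁.eval w) (fun w => f₂.eval w) := fun z => by
    simpa [eval_comp] using congrArg (Polynomial.eval z) hcomm
  -- f₁ maps filledJulia f₂ into itself
  have hmaps : ∀ z ∈ filledJulia f₂, f₁.eval z ∈ filledJulia f₂ := by
    intro z hz
    rw [filledJulia, Set.mem_setOf_eq]
    have hrange : (Set.range fun j : ℕ => (fun w => f₂.eval w)^[j] (f₁.eval z))
        ⊆ (fun w => f₁.eval w) '' (Set.range fun j : ℕ => (fun w => f₂.eval w)^[j] z) := by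
      rintro _ ⟨j, rfl⟩
      refine ⟨(fun w => f₂.eval w)^[j] z, ⟨j, rfl⟩, ?_⟩
      simpa using ((hc.iterate_right j).eq z)
    exact ((eval_maps_bounded f₁ hz).subset hrange)
  obtain ⟨R, hR⟩ := julia_subset_ball f₂ h₂
  intro z hz
  have hall : ∀ n : ℕ, (fun w => f₁.eval w)^[n] z ∈ filledJulia f₂ := by
    intro n
    induction n with
    | zero => exact hz
    | succ n ih => rw [Function.iterate_succ_apply']; exact hmaps _ ih
  rw [filledJulia, Set.mem_setOf_eq]
  refine (Metric.isBounded_closedBall (x := (0:ℂ)) (r := R)).subset ?_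
  rintro _ ⟨n, rfl⟩
  exact hR (hall n)

theorem stmt_8 (f₁ f₂ : Polynomial ℂ) (h₁ : 2 ≤ f₁.natDegree) (h₂ : 2 ≤ f₂.natDegree)
    (hcomm : f₁.comp f₂ = f₂.comp f₁) :
    filledJulia f₁ = filledJulia f₂ :=
  Set.Subset.antisymm (julia_mono f₂ f₁ h₁ hcomm.symm) (julia_mono f₁ f₂ h₂ hcomm)
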